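/- Let f_1,…,f_k : ℝⁿ → ℝ be continuously differentiable and ε ≥ 0. If x ∈ ℝⁿ is Pareto optimal, then 0 ∈ F_ε(x). -/

import Mathlib

/-- The Goldstein-type set `F_ε(x)` for continuously differentiable objectives:
the convex hull of all gradients of all objectives over the closed `ε`-ball around `x`. -/
noncomputable def Feps {n k : ℕ} (f : Fin k → EuclideanSpace ℝ (Fin n) → ℝ)
    (x : EuclideanSpace ℝ (Fin n)) (ε : ℝ) : Set (EuclideanSpace ℝ (Fin n)) :=
  convexHull ℝ (⋃ i, (fun y => gradient (f i) y) '' Metric.closedBall x ε)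

/-- if `x` is Pareto optimal, then `0 ∈ F_ε(x)`. -/
theorem pareto_optimal_zero_mem_Feps {n k : ℕ} (hk : 0 < k)
    (f : Fin k → EuclideanSpace ℝ (Fin n) → ℝ) (hf : ∀ i, ContDiff ℝ 1 (f i))
    (x : EuclideanSpace ℝ (Fin n)) (ε : ℝ) (hε : 0 ≤ ε)
    (hpareto : ¬ ∃ y : EuclideanSpace ℝ (Fin n),
      (∀ i, f i y ≤ f i x) ∧ (∃ j, f j y < f j x)) :
    (0 : EuclideanSpace ℝ (Fin n)) ∈ Feps f x ε := by
  set S : Set (EuclideanSpace ℝ (Fin n)) := Set.range (fun i => gradient (f i) x) with hS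
  have hsub : convexHull ℝ S ⊆ Feps f x ε := by
    apply convexHull_mono
    rintro _ ⟨i, rfl⟩
    exact Set.mem_iUnion.2 ⟨i, ⟨x, Metric.mem_closedBall_self hε, rfl⟩⟩
  by_contra h0
  have h0' : (0 : EuclideanSpace ℝ (Fin n)) ∉ convexHull ℝ S := fun h => h0 (hsub h)
  have hclosed : IsClosed (convexHull ℝ S) :=
    (Set.Finite.isCompact_convexHull (𝕜 := ℝ) (Set.finite_range _)).isClosed
  obtain ⟨φ, u, hu0, hub⟩ :=
    geometric_hahn_banach_point_closed (convex_convexHull ℝ S) hclosed h0'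
  have hu : 0 < u := by simpa using hu0
  set d : EuclideanSpace ℝ (Fin n) := -((InnerProductSpace.toDual ℝ (EuclideanSpace ℝ (Fin n))).symm φ) with hd
  -- derivative of t ↦ f i (x + t • d) at 0 is ⟪∇f i x, d⟫ < 0
  have key : ∀ i, ∀ᶠ t in nhdsWithin (0:ℝ) (Set.Ioi 0), f i (x + t • d) < f i x := by
    intro i
    have hdiff : DifferentiableAt ℝ (f i) x :=
      ((hf i).differentiable one_ne_zero).differentiableAt
    have hgrad := hdiff.hasGradientAt
    have hfd : HasFDerivAt (f i) (InnerProductSpace.toDual ℝ (EuclideanSpace ℝ (Fin n)) (gradient (f i) x)) x :=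
      hgrad.hasFDerivAt
    have hline : HasDerivAt (fun t : ℝ => x + t • d) d 0 := by
      simpa using ((hasDerivAt_id (0:ℝ)).smul_const d).const_add x
    have hfd' : HasFDerivAt (f i)
        (InnerProductSpace.toDual ℝ (EuclideanSpace ℝ (Fin n)) (gradient (f i) x))
        ((fun t : ℝ => x + t • d) 0) := by simpa using hfd
    have hcomp : HasDerivAt (fun t : ℝ => f i (x + t • d))
        (InnerProductSpace.toDual ℝ (EuclideanSpace ℝ (Fin n)) (gradient (f i) x) d) 0 := by
      exact hfd'.comp_hasDerivAt (0:ℝ) hline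
    have hneg : InnerProductSpace.toDual ℝ (EuclideanSpace ℝ (Fin n)) (gradient (f i) x) d < 0 := by
      have h1 : InnerProductSpace.toDual ℝ (EuclideanSpace ℝ (Fin n)) (gradient (f i) x) d
          = inner ℝ (gradient (f i) x) d := rfl
      have h2 : inner ℝ (gradient (f i) x) d = -(φ (gradient (f i) x)) := by
        rw [hd, inner_neg_right, real_inner_comm]
        simp only [InnerProductSpace.toDual_symm_apply]
      have h3 : u < φ (gradient (f i) x) :=
        hub _ (subset_convexHull ℝ S ⟨i, rfl⟩)
      rw [h1, h2]
      linarith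
    have hslope := hasDerivAt_iff_tendsto_slope.1 hcomp
    have hev : ∀ᶠ t in nhdsWithin (0:ℝ) {(0:ℝ)}ᶜ,
        slope (fun t : ℝ => f i (x + t • d)) 0 t < 0 :=
      hslope.eventually (Filter.tendsto_id.eventually_lt_const hneg)
    have hle : nhdsWithin (0:ℝ) (Set.Ioi 0) ≤ nhdsWithin (0:ℝ) {(0:ℝ)}ᶜ :=
      nhdsWithin_mono _ (fun t ht => ne_of_gt ht)
    filter_upwards [hle hev, self_mem_nhdsWithin] with t ht htpos
    have htpos' : (0:ℝ) < t := htpos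
    have : (f i (x + t • d) - f i (x + (0:ℝ) • d)) / (t - 0) < 0 := by
      simpa [slope_def_field, div_eq_inv_mul] using ht
    simp only [zero_smul, add_zero, sub_zero] at this
    have := (div_neg_iff.1 this)
    rcases this with ⟨h1, h2⟩ | ⟨h1, h2⟩
    · linarith
    · linarith
  have hall : ∀ᶠ t in nhdsWithin (0:ℝ) (Set.Ioi 0),
      ∀ i, f i (x + t • d) < f i x := Filter.eventually_all.2 key
  obtain ⟨t, ht⟩ := hall.exists
  exact hpareto ⟨x + t • d, fun i => (ht i).le, ⟨⟨0, hk⟩, ht _⟩⟩
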